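/- The union of all anchored sets of cardinality at most n (in the finitely supported sequences of ℕ₀^ℕ) is contained in the hyperbolic cross H_n^{n−1} = {μ ∈ ℕ₀^{n−1} : ∏_{j=1}^{n−1}(μ_j+1) ≤ n} (identifying sequences supported in {1,…,n−1} with elements of ℕ₀^{n−1}). -/

import Mathlib

def DownwardClosedF (Λ : Finset (ℕ →₀ ℕ)) : Prop :=
  ∀ ν ∈ Λ, ∀ μ : ℕ →₀ ℕ, μ ≤ ν → μ ∈ Λ

def Anchored (Λ : Finset (ℕ →₀ ℕ)) : Prop :=
  DownwardClosedF Λ ∧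
    ∀ j j' : ℕ, Finsupp.single j 1 ∈ Λ → j' ≤ j → Finsupp.single j' 1 ∈ Λ

/-- Every element of an anchored set of cardinality at most `n` is supported in the
first `n − 1` coordinates and lies in the hyperbolic cross `H_n^{n−1}`
(identifying sequences supported in the first `n−1` coordinates with elements of
`ℕ₀^{n−1}`). -/
theorem anchored_subset_hyperbolicCross (n : ℕ) (Λ : Finset (ℕ →₀ ℕ))
    (hΛ : Anchored Λ) (hcard : Λ.card ≤ n) :
    ∀ μ ∈ Λ, (∀ j : ℕ, n - 1 ≤ j → μ j = 0) ∧
      ∏ j ∈ Finset.range (n - 1), (μ j + 1) ≤ n := by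
  intro μ hμ
  obtain ⟨hdc, hanc⟩ := hΛ
  have hsupp : ∀ j : ℕ, n - 1 ≤ j → μ j = 0 := by
    intro j hj
    by_contra h
    have h1 : Finsupp.single j 1 ≤ μ := by
      rw [Finsupp.single_le_iff]; omega
    have hsing : ∀ i ≤ j, Finsupp.single i 1 ∈ Λ := fun i hi =>
      hanc j i (hdc μ hμ _ h1) hi
    have h0 : (0 : ℕ →₀ ℕ) ∈ Λ := hdc μ hμ 0 zero_le
    set S : Finset (ℕ →₀ ℕ) :=
      insert 0 ((Finset.range (j+1)).image (fun i => Finsupp.single i 1)) with hS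
    have hsub : S ⊆ Λ := by
      intro x hx
      simp only [hS, Finset.mem_insert, Finset.mem_image, Finset.mem_range] at hx
      rcases hx with rfl | ⟨i, hi, rfl⟩
      · exact h0
      · exact hsing i (by omega)
    have hnot : (0 : ℕ →₀ ℕ) ∉ (Finset.range (j+1)).image (fun i => Finsupp.single i 1) := by
      simp only [Finset.mem_image, Finset.mem_range]
      rintro ⟨i, -, hi⟩
      exact (one_ne_zero : (1:ℕ) ≠ 0) (Finsupp.single_eq_zero.mp hi)
    have hScard : S.card = j + 2 := by
      rw [hS, Finset.card_insert_of_notMem hnot,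
        Finset.card_image_of_injective _ (Finsupp.single_left_injective (one_ne_zero (α := ℕ))),
        Finset.card_range]
    have : j + 2 ≤ Λ.card := hScard ▸ Finset.card_le_card hsub
    omega
  refine ⟨hsupp, ?_⟩
  have hIic : Finset.Iic μ ⊆ Λ := fun ν hν => hdc μ hμ ν (Finset.mem_Iic.mp hν)
  have h1 : ∏ i ∈ μ.support, (μ i + 1) ≤ n := by
    have hc := Finsupp.card_Iic (f := μ)
    simp only [Nat.card_Iic] at hc
    rw [← hc]
    exact le_trans (Finset.card_le_card hIic) hcard
  have h2 : ∏ j ∈ Finset.range (n-1), (μ j + 1) = ∏ i ∈ μ.support, (μ i + 1) := by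
    refine (Finset.prod_subset ?_ ?_).symm
    · intro i hi
      rw [Finset.mem_range]
      by_contra h
      exact (Finsupp.mem_support_iff.mp hi) (hsupp i (by omega))
    · intro x _ hx
      simp [Finsupp.notMem_support_iff.mp hx]
  omega
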